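/- Let F̄(x) = c(x)·exp(−∫_0^x 1/a(y) dy) for x ≥ 0, where c : [0,∞) → (0,∞) is measurable with c(x) → c₀ > 0 as x → ∞, and a : [0,∞) → (0,∞) is measurable with 1/a locally integrable and a(x) → σ as x → ∞, where 0 < σ < ∞. Let p : ℕ → (0,∞) satisfy p(k) = F̄(k) for all k ∈ ℕ. Then for every k ∈ ℕ, p(k + u) / ∑_{i=0}^{∞} p(i + u) → (1 − e^{−1/σ}) e^{−k/σ} as u → ∞ along the positive integers; that is, the normalized exceedance probabilities converge to the geometric probability mass function with parameter 1 − e^{−1/σ}. -/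

import Mathlib

open MeasureTheory Filter

/-- Let `F̄(x) = c(x)·exp(-∫₀ˣ 1/a(y) dy)` with `c(x) → c₀ > 0` and
auxiliary function `a(x) → σ ∈ (0,∞)`, and let `p(k) = F̄(k)` on `ℕ`. Then for every
`k ∈ ℕ`, `p(k+u)/∑_{i=0}^∞ p(i+u) → (1 - e^(-1/σ}) e^(-k/σ)` as `u → ∞` over the
positive integers: the normalized exceedance probabilities converge to the geometric
probability mass function. -/
theorem gumbel_exceedances_tendsto_geometric
    (c a : ℝ → ℝ) (c₀ σ : ℝ) (hc₀ : 0 < c₀) (hσ : 0 < σ)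
    (hcpos : ∀ x ≥ (0:ℝ), 0 < c x) (hcmeas : Measurable c)
    (hclim : Tendsto c atTop (nhds c₀))
    (hapos : ∀ x ≥ (0:ℝ), 0 < a x) (hameas : Measurable a)
    (haint : ∀ x ≥ (0:ℝ), IntegrableOn (fun y => (a y)⁻¹) (Set.Icc 0 x))
    (halim : Tendsto a atTop (nhds σ))
    (F : ℝ → ℝ)
    (hF : ∀ x ≥ (0:ℝ), F x = c x * Real.exp (-∫ y in (0:ℝ)..x, (a y)⁻¹))
    (p : ℕ → ℝ) (hp : ∀ k : ℕ, p k = F k) :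
    ∀ k : ℕ, Tendsto (fun u : ℕ => p (k + u) / ∑' i : ℕ, p (i + u))
      atTop (nhds ((1 - Real.exp (-1 / σ)) * Real.exp (-(k : ℝ) / σ))) := by
  have hpF : ∀ u : ℕ, p u = c u * Real.exp (-∫ y in (0:ℝ)..(u:ℝ), (a y)⁻¹) :=
    fun u => (hp u).trans (hF u (Nat.cast_nonneg u))
  have hppos : ∀ u : ℕ, 0 < p u := by
    intro u
    rw [hpF u]
    exact mul_pos (hcpos u (Nat.cast_nonneg u)) (Real.exp_pos _)
  have hII : ∀ u v : ℝ, 0 ≤ u → u ≤ v →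
      IntervalIntegrable (fun y => (a y)⁻¹) volume u v := by
    intro u v hu huv
    rw [intervalIntegrable_iff_integrableOn_Icc_of_le huv]
    exact (haint v (hu.trans huv)).mono_set (Set.Icc_subset_Icc hu le_rfl)
  -- ratio formula
  have hq : ∀ u j : ℕ, p (j + u) / p u =
      (c ((u:ℝ) + j) / c u) * Real.exp (-∫ y in (u:ℝ)..((u:ℝ) + j), (a y)⁻¹) := by
    intro u j
    have h1 : ((j + u : ℕ) : ℝ) = (u:ℝ) + j := by push_cast; ring
    have hu0 : (0:ℝ) ≤ (u:ℝ) := Nat.cast_nonneg u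
    have hj0 : (0:ℝ) ≤ (j:ℝ) := Nat.cast_nonneg j
    have hadd := intervalIntegral.integral_add_adjacent_intervals
      (hII 0 u le_rfl hu0)
      (hII u ((u:ℝ) + j) hu0 (by linarith))
    rw [hpF, hpF, h1, mul_div_mul_comm, ← Real.exp_sub]
    have harg : (-∫ y in (0:ℝ)..((u:ℝ) + j), (a y)⁻¹) - -∫ y in (0:ℝ)..(u:ℝ), (a y)⁻¹
        = -∫ y in (u:ℝ)..((u:ℝ) + j), (a y)⁻¹ := by linarith
    rw [harg]
  -- limit of the local integral
  have hint : ∀ j : ℕ, Tendsto (fun u : ℕ => ∫ y in (u:ℝ)..((u:ℝ) + j), (a y)⁻¹)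
      atTop (nhds ((j:ℝ)/σ)) := by
    intro j
    rw [Metric.tendsto_nhds]
    intro ε hε
    have hainv : Tendsto (fun y => (a y)⁻¹) atTop (nhds σ⁻¹) := halim.inv₀ hσ.ne'
    have hev : ∀ᶠ y : ℝ in atTop, |(a y)⁻¹ - σ⁻¹| < ε / (j + 1) := by
      have := Metric.tendsto_nhds.mp hainv (ε / (j + 1)) (by positivity)
      simpa [Real.dist_eq] using this
    obtain ⟨Y, hY⟩ := eventually_atTop.mp hev
    have hcast : Tendsto (fun u : ℕ => (u:ℝ)) atTop atTop := tendsto_natCast_atTop_atTop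
    filter_upwards [hcast.eventually (eventually_ge_atTop Y),
      hcast.eventually (eventually_ge_atTop (0:ℝ))] with u hu hu0
    have hj0 : (0:ℝ) ≤ (j:ℝ) := Nat.cast_nonneg j
    have hIa := hII u ((u:ℝ) + j) hu0 (by linarith)
    have hsub : (∫ y in (u:ℝ)..((u:ℝ) + j), ((a y)⁻¹ - σ⁻¹))
        = (∫ y in (u:ℝ)..((u:ℝ) + j), (a y)⁻¹) - (j:ℝ)/σ := by
      rw [intervalIntegral.integral_sub hIa intervalIntegrable_const,
        intervalIntegral.integral_const, smul_eq_mul,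
        show ((u:ℝ) + j) - u = (j:ℝ) from by ring, div_eq_mul_inv]
    have hb : ‖∫ y in (u:ℝ)..((u:ℝ) + j), ((a y)⁻¹ - σ⁻¹)‖
        ≤ (ε / (j + 1)) * |((u:ℝ) + j) - u| := by
      apply intervalIntegral.norm_integral_le_of_norm_le_const
      intro y hy
      rw [Set.uIoc_of_le (by linarith)] at hy
      have : Y ≤ y := le_trans hu (le_of_lt hy.1)
      simpa [Real.norm_eq_abs] using (hY y this).le
    rw [Real.dist_eq, ← hsub]
    have : |((u:ℝ) + j) - u| = (j:ℝ) := by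
      rw [abs_of_nonneg (by linarith)]; ring
    rw [Real.norm_eq_abs, this] at hb
    calc |∫ y in (u:ℝ)..((u:ℝ) + j), ((a y)⁻¹ - σ⁻¹)| ≤ (ε / (j + 1)) * j := hb
      _ < ε := by
          rw [div_mul_eq_mul_div, div_lt_iff₀ (by positivity)]
          nlinarith
  -- pointwise limits of the ratios
  have hcn : Tendsto (fun u : ℕ => c u) atTop (nhds c₀) :=
    hclim.comp tendsto_natCast_atTop_atTop
  have hA : ∀ j : ℕ, Tendsto (fun u : ℕ => p (j + u) / p u) atTop
      (nhds (Real.exp (-(j:ℝ)/σ))) := by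
    intro j
    have hcj : Tendsto (fun u : ℕ => c ((u:ℝ) + j)) atTop (nhds c₀) :=
      hclim.comp (tendsto_atTop_add_const_right _ _ tendsto_natCast_atTop_atTop)
    have hexp : Tendsto (fun u : ℕ => Real.exp (-∫ y in (u:ℝ)..((u:ℝ) + j), (a y)⁻¹))
        atTop (nhds (Real.exp (-((j:ℝ)/σ)))) :=
      (Real.continuous_exp.tendsto _).comp (hint j).neg
    have := (hcj.div hcn hc₀.ne').mul hexp
    rw [div_self hc₀.ne', one_mul] at this
    have heq : (fun u : ℕ => p (j + u) / p u)
        = fun u : ℕ => (c ((u:ℝ) + j) / c u) * Real.exp (-∫ y in (u:ℝ)..((u:ℝ) + j), (a y)⁻¹) := by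
      funext u; exact hq u j
    rw [heq]
    convert this using 2
    · simp only [Pi.div_apply]
    · rw [neg_div]
  -- uniform geometric bound
  have h2σ : (0:ℝ) < (2*σ)⁻¹ := by positivity
  set r : ℝ := Real.exp (-(2*σ)⁻¹) with hr
  have hrlt : r < 1 := Real.exp_lt_one_iff.mpr (by linarith)
  have hrpos : 0 < r := Real.exp_pos _
  have hevb : ∀ᶠ y : ℝ in atTop, a y < 2*σ ∧ c₀/2 < c y ∧ c y < 2*c₀ := by
    filter_upwards [halim.eventually_lt_const (show σ < 2*σ by linarith),
      hclim.eventually_const_lt (show c₀/2 < c₀ by linarith),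
      hclim.eventually_lt_const (show c₀ < 2*c₀ by linarith)] with y h1 h2 h3
    exact ⟨h1, h2, h3⟩
  obtain ⟨Y, hY⟩ := eventually_atTop.mp hevb
  have hbound : ∀ᶠ u : ℕ in atTop, ∀ i : ℕ, ‖p (i + u) / p u‖ ≤ 4 * r ^ i := by
    have hcast : Tendsto (fun u : ℕ => (u:ℝ)) atTop atTop := tendsto_natCast_atTop_atTop
    filter_upwards [hcast.eventually (eventually_ge_atTop Y),
      hcast.eventually (eventually_ge_atTop (0:ℝ))] with u hu hu0
    intro i
    have hi0 : (0:ℝ) ≤ (i:ℝ) := Nat.cast_nonneg i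
    rw [hq u i]
    have hiu : Y ≤ (u:ℝ) + i := by linarith
    have hcu := hY u hu
    have hciu := hY ((u:ℝ) + i) hiu
    -- integral lower bound
    have hIa := hII u ((u:ℝ) + i) hu0 (by linarith)
    have hge : (i:ℝ) * (2*σ)⁻¹ ≤ ∫ y in (u:ℝ)..((u:ℝ) + i), (a y)⁻¹ := by
      have hmono := intervalIntegral.integral_mono_on (show (u:ℝ) ≤ (u:ℝ) + i by linarith)
        intervalIntegrable_const hIa
        (fun y hy => by
          have hy0 : (0:ℝ) ≤ y := le_trans hu0 hy.1
          have hY' : Y ≤ y := le_trans hu hy.1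
          exact inv_anti₀ (hapos y hy0) (hY y hY').1.le)
      rw [intervalIntegral.integral_const, smul_eq_mul,
        show ((u:ℝ) + i) - u = (i:ℝ) from by ring] at hmono
      exact hmono
    have hexp_le : Real.exp (-∫ y in (u:ℝ)..((u:ℝ) + i), (a y)⁻¹) ≤ r ^ i := by
      rw [hr, ← Real.exp_nat_mul]
      exact Real.exp_le_exp.mpr (by nlinarith)
    have hcle : c ((u:ℝ) + i) / c u ≤ 4 := by
      have := div_le_div₀ (by linarith : (0:ℝ) ≤ 2*c₀) hciu.2.2.le
        (by linarith : (0:ℝ) < c₀/2) hcu.2.1.le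
      have h4 : 2*c₀/(c₀/2) = 4 := by field_simp; ring
      linarith [this, h4.le]
    have hcnn : 0 ≤ c ((u:ℝ) + i) / c u :=
      le_of_lt (div_pos (hcpos _ (by linarith)) (hcpos _ hu0))
    have hval : 0 ≤ (c ((u:ℝ) + i) / c u) * Real.exp (-∫ y in (u:ℝ)..((u:ℝ) + i), (a y)⁻¹) :=
      mul_nonneg hcnn (Real.exp_pos _).le
    rw [Real.norm_eq_abs, abs_of_nonneg hval]
    exact mul_le_mul hcle hexp_le (Real.exp_pos _).le (by norm_num)
  have hBsum : Summable (fun i : ℕ => 4 * r ^ i) :=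
    (summable_geometric_of_lt_one hrpos.le hrlt).mul_left 4
  -- limit of the normalizing sum
  have hT : Tendsto (fun u : ℕ => ∑' i : ℕ, p (i + u) / p u) atTop
      (nhds ((1 - Real.exp (-1/σ))⁻¹)) := by
    have := tendsto_tsum_of_dominated_convergence hBsum hA hbound
    have hgeq : (∑' i : ℕ, Real.exp (-(i:ℝ)/σ)) = (1 - Real.exp (-1/σ))⁻¹ := by
      have h1 : ∀ i : ℕ, Real.exp (-(i:ℝ)/σ) = (Real.exp (-1/σ)) ^ i := by
        intro i
        rw [← Real.exp_nat_mul]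
        congr 1; ring
      rw [tsum_congr h1, tsum_geometric_of_lt_one (Real.exp_pos _).le
        (Real.exp_lt_one_iff.mpr (div_neg_of_neg_of_pos (by norm_num) hσ))]
    rwa [hgeq] at this
  -- combine
  intro k
  have hne : (1 - Real.exp (-1/σ))⁻¹ ≠ 0 := by
    have h1 : Real.exp (-1/σ) < 1 :=
      Real.exp_lt_one_iff.mpr (div_neg_of_neg_of_pos (by norm_num) hσ)
    exact ne_of_gt (inv_pos.mpr (by linarith))
  have hfinal := (hA k).div hT hne
  have hval : Real.exp (-(k:ℝ)/σ) / (1 - Real.exp (-1/σ))⁻¹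
      = (1 - Real.exp (-1/σ)) * Real.exp (-(k:ℝ)/σ) := by
    rw [div_eq_mul_inv, inv_inv, mul_comm]
  rw [hval] at hfinal
  refine hfinal.congr (fun u => ?_)
  have hpu := (hppos u).ne'
  have hTs : (∑' i : ℕ, p (i + u) / p u) = (∑' i : ℕ, p (i + u)) * (p u)⁻¹ := by
    simp_rw [div_eq_mul_inv]
    exact tsum_mul_right
  simp only [Pi.div_apply]
  rw [hTs, div_div]
  congr 1
  rw [mul_comm (∑' i : ℕ, p (i + u)) (p u)⁻¹, ← mul_assoc, mul_inv_cancel₀ hpu, one_mul]
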